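/- Follower-stage equilibrium of the three-player first-mover Tullock contest: fix a leader effort t with 0 ≤ t < 1 and set X(t) = (1 + √(1 + 8t))/4 and y*(t) = X(t) − X(t)². Then y*(t) > 0 for t < 1 (and y*(t) ≥ 0 for t ≤ 1), X(t) satisfies 2X(t)² − X(t) = t, and the symmetric pair (y*(t), y*(t)) is a Nash equilibrium of the two-player follower game in which a follower choosing y ≥ 0 against opponent effort y′ ≥ 0 receives payoff y/(t + y + y′) − y: for every y ≥ 0, y/(t + y + y*(t)) − y ≤ y*(t)/(t + 2y*(t)) − y*(t). -/

import Mathlib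

/-- Follower-stage equilibrium of the three-player first-mover Tullock contest. -/
theorem stmt_14 (t : ℝ) (ht0 : 0 ≤ t) (ht1 : t < 1)
    (X : ℝ) (hX : X = (1 + Real.sqrt (1 + 8 * t)) / 4)
    (ystar : ℝ) (hy : ystar = X - X ^ 2) :
    0 < ystar ∧ 2 * X ^ 2 - X = t ∧
    ∀ y : ℝ, 0 ≤ y →
      y / (t + y + ystar) - y ≤ ystar / (t + 2 * ystar) - ystar := by
  set s := Real.sqrt (1 + 8 * t) with hsdef
  have hs2 : s ^ 2 = 1 + 8 * t := Real.sq_sqrt (by linarith)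
  have hs0 : 0 ≤ s := Real.sqrt_nonneg _
  have hs3 : s < 3 := by nlinarith
  have hXlo : (1:ℝ)/4 ≤ X := by rw [hX]; linarith
  have hXhi : X < 1 := by rw [hX]; linarith
  have hXpos : 0 < X := by linarith
  have hyt : 2 * X ^ 2 - X = t := by rw [hX]; nlinarith
  have hypos : 0 < ystar := by rw [hy]; nlinarith
  refine ⟨hypos, hyt, fun y hy0 => ?_⟩
  have h1 : t + 2 * ystar = X := by rw [hy]; linarith
  have h2 : t + y + ystar = X ^ 2 + y := by rw [hy]; linarith
  have hden : 0 < X ^ 2 + y := by positivity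
  rw [h1, h2]
  have hr : ystar / X = 1 - X := by
    rw [hy]; field_simp
  rw [hr]
  rw [div_sub' (ne_of_gt hden), div_le_iff₀ hden]
  nlinarith [sq_nonneg (y - ystar)]
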